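/- Let H ⊆ {1,...,n}² be a dense board with |H| = A ≥ c(u+v)², where u ≥ v are the sizes of the projections. Then for every ±1 assignment on H there exist switch settings with discrepancy at least c_2 · A^{3/4} for some constant c_2 > 0 depending only on c. -/

import Mathlib

open Finset

namespace Stmt9Aux

noncomputable section

def chi (s : Finset ℕ) (j : ℕ) : ℤ := if j ∈ s then 1 else -1

def Xr (b : ℕ → ℤ) (S s : Finset ℕ) : ℤ := ∑ j ∈ S, b j * chi s j

lemma chi_eq_one_or (s : Finset ℕ) (j : ℕ) : chi s j = 1 ∨ chi s j = -1 := by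
  unfold chi; split <;> simp

lemma chi_insert_self (s : Finset ℕ) (j : ℕ) : chi (insert j s) j = 1 := by simp [chi]

lemma chi_insert_ne (s : Finset ℕ) {i j : ℕ} (h : i ≠ j) : chi (insert j s) i = chi s i := by
  simp [chi, Finset.mem_insert, h]

lemma chi_of_not_mem {s : Finset ℕ} {j : ℕ} (h : j ∉ s) : chi s j = -1 := by simp [chi, h]

lemma Xr_insert_left {b : ℕ → ℤ} {S : Finset ℕ} {j : ℕ} (hj : j ∉ S) (s : Finset ℕ) :
    Xr b (insert j S) s = Xr b S s + b j * chi s j := by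
  simp [Xr, Finset.sum_insert hj]; ring

lemma Xr_insert_right {b : ℕ → ℤ} {S : Finset ℕ} {j : ℕ} (hj : j ∉ S) (s : Finset ℕ) :
    Xr b S (insert j s) = Xr b S s := by
  apply Finset.sum_congr rfl
  intro i hi
  rw [chi_insert_ne]
  rintro rfl; exact hj hi

lemma M2 {b : ℕ → ℤ} {S : Finset ℕ} (hb : ∀ j ∈ S, b j = 1 ∨ b j = -1) :
    ∑ s ∈ S.powerset, (Xr b S s) ^ 2 = 2 ^ S.card * S.card := by
  induction S using Finset.induction_on with
  | empty => simp [Xr]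
  | insert _ _ hj =>
    rename_i j S ih
    have hbS : ∀ i ∈ S, b i = 1 ∨ b i = -1 := fun i hi => hb i (mem_insert_of_mem hi)
    have hbj : b j ^ 2 = 1 := by
      rcases hb j (mem_insert_self j S) with h | h <;> rw [h] <;> ring
    rw [Finset.sum_powerset_insert hj]
    have key : ∀ s ∈ S.powerset,
        (Xr b (insert j S) s) ^ 2 + (Xr b (insert j S) (insert j s)) ^ 2
          = 2 * (Xr b S s) ^ 2 + 2 := by
      intro s hs
      have hjs : j ∉ s := fun h => hj (mem_powerset.mp hs h)
      rw [Xr_insert_left hj s, Xr_insert_left hj (insert j s), Xr_insert_right hj,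
        chi_insert_self, chi_of_not_mem hjs]
      nlinarith [hbj]
    have : ∑ s ∈ S.powerset, ((Xr b (insert j S) s) ^ 2 + (Xr b (insert j S) (insert j s)) ^ 2)
        = ∑ s ∈ S.powerset, (2 * (Xr b S s) ^ 2 + 2) := Finset.sum_congr rfl key
    rw [Finset.sum_add_distrib] at this
    rw [this, Finset.sum_add_distrib, ← Finset.mul_sum, ih hbS, Finset.sum_const,
      Finset.card_powerset, Finset.card_insert_of_notMem hj]
    push_cast
    ring

lemma M4 {b : ℕ → ℤ} {S : Finset ℕ} (hb : ∀ j ∈ S, b j = 1 ∨ b j = -1) :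
    ∑ s ∈ S.powerset, (Xr b S s) ^ 4 ≤ 3 * 2 ^ S.card * S.card ^ 2 := by
  induction S using Finset.induction_on with
  | empty => simp [Xr]
  | insert _ _ hj =>
    rename_i j S ih
    have hbS : ∀ i ∈ S, b i = 1 ∨ b i = -1 := fun i hi => hb i (mem_insert_of_mem hi)
    have hbj : b j ^ 2 = 1 := by
      rcases hb j (mem_insert_self j S) with h | h <;> rw [h] <;> ring
    rw [Finset.sum_powerset_insert hj]
    have key : ∀ s ∈ S.powerset,
        (Xr b (insert j S) s) ^ 4 + (Xr b (insert j S) (insert j s)) ^ 4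
          = 2 * (Xr b S s) ^ 4 + 12 * (Xr b S s) ^ 2 + 2 := by
      intro s hs
      have hjs : j ∉ s := fun h => hj (mem_powerset.mp hs h)
      rw [Xr_insert_left hj s, Xr_insert_left hj (insert j s), Xr_insert_right hj,
        chi_insert_self, chi_of_not_mem hjs]
      nlinarith [hbj, sq_nonneg (Xr b S s), sq_nonneg (b j)]
    have e1 : ∑ s ∈ S.powerset,
          ((Xr b (insert j S) s) ^ 4 + (Xr b (insert j S) (insert j s)) ^ 4)
        = ∑ s ∈ S.powerset, (2 * (Xr b S s) ^ 4 + 12 * (Xr b S s) ^ 2 + 2) :=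
      Finset.sum_congr rfl key
    rw [Finset.sum_add_distrib] at e1
    rw [e1]
    have e2 : ∑ s ∈ S.powerset, (2 * (Xr b S s) ^ 4 + 12 * (Xr b S s) ^ 2 + 2)
        = 2 * (∑ s ∈ S.powerset, (Xr b S s) ^ 4) + 12 * (2 ^ S.card * S.card) + 2 * 2 ^ S.card := by
      rw [Finset.sum_add_distrib, Finset.sum_add_distrib, ← Finset.mul_sum, ← Finset.mul_sum,
        M2 hbS, Finset.sum_const, Finset.card_powerset, nsmul_eq_mul]
      push_cast
      ring
    rw [e2, Finset.card_insert_of_notMem hj]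
    have h4 := ih hbS
    have hk : (0:ℤ) ≤ S.card := Int.ofNat_nonneg _
    have hp : (0:ℤ) < 2 ^ S.card := by positivity
    have hexp : (3:ℤ) * 2 ^ (S.card + 1) * ((S.card : ℤ) + 1) ^ 2
        = 6 * 2 ^ S.card * (S.card : ℤ) ^ 2 + 12 * (2 ^ S.card * (S.card : ℤ)) + 6 * 2 ^ S.card := by
      rw [pow_succ]; ring
    push_cast
    linarith [h4, hp, hexp]


lemma M1_lower {b : ℕ → ℤ} {S : Finset ℕ} (hb : ∀ j ∈ S, b j = 1 ∨ b j = -1)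
    (hS : S.Nonempty) :
    (2:ℝ) ^ S.card * Real.sqrt S.card / Real.sqrt 3
      ≤ ∑ s ∈ S.powerset, |((Xr b S s : ℤ) : ℝ)| := by
  set N : ℝ := (2:ℝ) ^ S.card with hN
  set k : ℝ := (S.card : ℝ) with hk
  have hNpos : 0 < N := by positivity
  have hk1 : 1 ≤ k := by
    have h : (1:ℕ) ≤ S.card := Finset.card_pos.mpr hS
    rw [hk]
    exact_mod_cast h
  have hkpos : 0 < k := lt_of_lt_of_le one_pos hk1
  set X : Finset ℕ → ℝ := fun s => ((Xr b S s : ℤ) : ℝ) with hX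
  have hM2 : ∑ s ∈ S.powerset, (X s) ^ 2 = N * k := by
    have h0 := M2 hb
    have h1 : ((∑ s ∈ S.powerset, (Xr b S s) ^ 2 : ℤ) : ℝ) = ((2 ^ S.card * (S.card : ℤ) : ℤ) : ℝ) := by
      exact_mod_cast h0
    push_cast at h1
    simpa [hX, hN, hk] using h1
  have hM4 : ∑ s ∈ S.powerset, (X s) ^ 4 ≤ 3 * N * k ^ 2 := by
    have := M4 hb
    have h2 : ((∑ s ∈ S.powerset, (Xr b S s) ^ 4 : ℤ) : ℝ) ≤ ((3 * 2 ^ S.card * S.card ^ 2 : ℤ) : ℝ) := by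
      exact_mod_cast this
    push_cast at h2
    simpa [hX, hN, hk] using h2
  set M1 : ℝ := ∑ s ∈ S.powerset, |X s| with hM1
  set M3 : ℝ := ∑ s ∈ S.powerset, |X s| ^ 3 with hM3
  have hM1nn : 0 ≤ M1 := Finset.sum_nonneg fun s _ => abs_nonneg _
  have hM3nn : 0 ≤ M3 := Finset.sum_nonneg fun s _ => pow_nonneg (abs_nonneg _) 3
  -- Cauchy-Schwarz 1 : (∑ X²)² ≤ M1 * M3
  have CS1 : (N * k) ^ 2 ≤ M1 * M3 := by
    have h := Finset.sum_mul_sq_le_sq_mul_sq S.powerset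
      (fun s => Real.sqrt |X s|) (fun s => |X s| * Real.sqrt |X s|)
    have e1 : ∑ s ∈ S.powerset, Real.sqrt |X s| * (|X s| * Real.sqrt |X s|)
        = ∑ s ∈ S.powerset, (X s) ^ 2 := by
      refine Finset.sum_congr rfl fun s _ => ?_
      have : Real.sqrt |X s| * Real.sqrt |X s| = |X s| := Real.mul_self_sqrt (abs_nonneg _)
      calc Real.sqrt |X s| * (|X s| * Real.sqrt |X s|)
          = |X s| * (Real.sqrt |X s| * Real.sqrt |X s|) := by ring
        _ = |X s| * |X s| := by rw [this]
        _ = (X s) ^ 2 := by rw [← sq_abs]; ring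
    have e2 : ∑ s ∈ S.powerset, (Real.sqrt |X s|) ^ 2 = M1 := by
      refine Finset.sum_congr rfl fun s _ => Real.sq_sqrt (abs_nonneg _)
    have e3 : ∑ s ∈ S.powerset, (|X s| * Real.sqrt |X s|) ^ 2 = M3 := by
      refine Finset.sum_congr rfl fun s _ => ?_
      rw [mul_pow, Real.sq_sqrt (abs_nonneg _)]
      ring
    rw [e1, e2, e3, hM2] at h
    exact h
  -- Cauchy-Schwarz 2 : M3² ≤ (∑X²)(∑X⁴)
  have CS2 : M3 ^ 2 ≤ (N * k) * (3 * N * k ^ 2) := by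
    have h := Finset.sum_mul_sq_le_sq_mul_sq S.powerset
      (fun s => |X s|) (fun s => (X s) ^ 2)
    have e1 : ∑ s ∈ S.powerset, |X s| * (X s) ^ 2 = M3 := by
      refine Finset.sum_congr rfl fun s _ => ?_
      rw [← sq_abs]; ring
    have e2 : ∑ s ∈ S.powerset, |X s| ^ 2 = ∑ s ∈ S.powerset, (X s) ^ 2 := by
      refine Finset.sum_congr rfl fun s _ => sq_abs _
    rw [e1, e2, hM2] at h
    have h4 : (∑ s ∈ S.powerset, ((X s) ^ 2) ^ 2) = ∑ s ∈ S.powerset, (X s) ^ 4 := by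
      refine Finset.sum_congr rfl fun s _ => by ring
    rw [h4] at h
    calc M3 ^ 2 ≤ N * k * ∑ s ∈ S.powerset, (X s) ^ 4 := h
      _ ≤ (N * k) * (3 * N * k ^ 2) :=
        mul_le_mul_of_nonneg_left hM4 (by positivity)
  set a : ℝ := Real.sqrt k with ha
  have ha2 : a ^ 2 = k := Real.sq_sqrt hkpos.le
  have hapos : 0 < a := Real.sqrt_pos.mpr hkpos
  set s3 : ℝ := Real.sqrt 3 with hs3
  have hs32 : s3 ^ 2 = 3 := Real.sq_sqrt (by norm_num)
  have hs3pos : 0 < s3 := Real.sqrt_pos.mpr (by norm_num)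
  -- M3 ≤ s3 * N * k * a
  have hM3le : M3 ≤ s3 * N * k * a := by
    have hC : (s3 * N * k * a) ^ 2 = (N * k) * (3 * N * k ^ 2) := by
      rw [← hs32, ← ha2] at *
      nlinarith [hs32, ha2]
    have hCpos : 0 ≤ s3 * N * k * a := by positivity
    nlinarith [CS2, hC, hM3nn, hCpos, sq_nonneg (M3 - s3 * N * k * a), sq_nonneg (M3 + s3 * N * k * a)]
  have key : (N * k) ^ 2 ≤ M1 * (s3 * N * k * a) :=
    le_trans CS1 (mul_le_mul_of_nonneg_left hM3le hM1nn)
  rw [div_le_iff₀ hs3pos]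
  -- goal : N * a ≤ M1 * s3
  have hD : 0 < N * k * a := by positivity
  refine le_of_mul_le_mul_right ?_ hD
  calc N * a * (N * k * a) = (N * k) ^ 2 := by rw [← ha2]; ring
    _ ≤ M1 * (s3 * N * k * a) := key
    _ = M1 * s3 * (N * k * a) := by ring

lemma sum_powerset_union (b : ℕ → ℤ) (S : Finset ℕ) (F : ℤ → ℝ) :
    ∀ w : Finset ℕ, Disjoint w S →
      ∑ s ∈ (S ∪ w).powerset, F (Xr b S s) = 2 ^ w.card * ∑ s ∈ S.powerset, F (Xr b S s) := by
  intro w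
  induction w using Finset.induction_on with
  | empty => simp
  | insert _ _ hj =>
    rename_i j w ih
    intro hdisj
    have hdw : Disjoint w S := (disjoint_insert_left.mp hdisj).2
    have hjS : j ∉ S := (disjoint_insert_left.mp hdisj).1
    have hjSw : j ∉ S ∪ w := by
      simp only [mem_union]
      rintro (h | h)
      · exact hjS h
      · exact hj h
    have e : S ∪ insert j w = insert j (S ∪ w) := Finset.union_insert j S w
    rw [e, Finset.sum_powerset_insert hjSw]
    have e2 : ∀ s ∈ (S ∪ w).powerset, F (Xr b S (insert j s)) = F (Xr b S s) := by
      intro s _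
      rw [Xr_insert_right hjS]
    rw [Finset.sum_congr rfl e2, ih hdw, Finset.card_insert_of_notMem hj]
    ring

lemma row_lower {b : ℕ → ℤ} {S t : Finset ℕ} (hb : ∀ j ∈ S, b j = 1 ∨ b j = -1)
    (hS : S.Nonempty) (hSt : S ⊆ t) :
    (2:ℝ) ^ t.card * Real.sqrt S.card / Real.sqrt 3
      ≤ ∑ s ∈ t.powerset, |((Xr b S s : ℤ) : ℝ)| := by
  have hdisj : Disjoint (t \ S) S := sdiff_disjoint
  have hu : S ∪ (t \ S) = t := Finset.union_sdiff_of_subset hSt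
  have h := sum_powerset_union b S (fun z => |((z : ℤ) : ℝ)|) (t \ S) hdisj
  rw [hu] at h
  rw [h, Finset.card_sdiff_of_subset hSt]
  have hcard : (2:ℝ) ^ (t.card - S.card) * 2 ^ S.card = 2 ^ t.card := by
    rw [← pow_add, Nat.sub_add_cancel (Finset.card_le_card hSt)]
  have hbase := M1_lower hb hS
  calc (2:ℝ) ^ t.card * Real.sqrt S.card / Real.sqrt 3
      = 2 ^ (t.card - S.card) * ((2:ℝ) ^ S.card * Real.sqrt S.card / Real.sqrt 3) := by
        rw [← hcard]; ring
    _ ≤ 2 ^ (t.card - S.card) * ∑ s ∈ S.powerset, |((Xr b S s : ℤ) : ℝ)| :=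
        mul_le_mul_of_nonneg_left hbase (by positivity)

end

end Stmt9Aux

lemma alg1 (q x sv s3 P : ℝ) (h3 : s3 ≠ 0) :
    P * (q / s3 * x) * (s3 * sv) = P * (q * x * sv) := by
  field_simp

lemma alg2 (P s3 sv Sg : ℝ) (h3 : s3 ≠ 0) :
    P * (sv * Sg) = (P / s3 * Sg) * (s3 * sv) := by
  field_simp

set_option maxHeartbeats 1000000 in
/-- Dense board lower bound: for every `c > 0` there is `c₂ > 0` such that for
every dense board `H ⊆ {1,…,n}²` with `|H| = A ≥ c(u+v)²` and `u ≥ v`, every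
`±1` assignment on `H` admits switch settings with discrepancy at least
`c₂ · A^(3/4)`. -/
theorem stmt_9 (c : ℝ) (hc : 0 < c) :
    ∃ c₂ : ℝ, 0 < c₂ ∧
      ∀ (n : ℕ) (H : Finset (ℕ × ℕ)),
        H ⊆ Finset.Icc 1 n ×ˢ Finset.Icc 1 n →
        (H.image Prod.snd).card ≤ (H.image Prod.fst).card →
        c * ((H.image Prod.fst).card + (H.image Prod.snd).card : ℝ) ^ 2
            ≤ (H.card : ℝ) →
        ∀ a : ℕ × ℕ → ℤ, (∀ p ∈ H, a p = 1 ∨ a p = -1) →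
          ∃ x y : ℕ → ℤ, (∀ i, x i = 1 ∨ x i = -1) ∧ (∀ j, y j = 1 ∨ y j = -1) ∧
            c₂ * (H.card : ℝ) ^ ((3 : ℝ)/4)
              ≤ ((∑ p ∈ H, a p * x p.1 * y p.2 : ℤ) : ℝ) := by
  classical
  refine ⟨Real.sqrt (Real.sqrt c) / Real.sqrt 3, by positivity, ?_⟩
  intro n H _ _ hAineq a ha
  rcases H.eq_empty_or_nonempty with rfl | hne
  · exact ⟨fun _ => 1, fun _ => 1, fun _ => Or.inl rfl, fun _ => Or.inl rfl, by
      simp [Real.zero_rpow (by norm_num : ((3:ℝ)/4) ≠ 0)]⟩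
  set U := H.image Prod.fst with hU
  set V := H.image Prod.snd with hV
  set Row : ℕ → Finset (ℕ × ℕ) := fun i => H.filter (fun p => p.1 = i) with hRow
  set S : ℕ → Finset ℕ := fun i => (Row i).image Prod.snd with hSdef
  set b : ℕ → ℕ → ℤ := fun i j => a (i, j) with hbdef
  set R : ℕ → Finset ℕ → ℤ := fun i s => Stmt9Aux.Xr (b i) (S i) s with hRdef
  set A : ℝ := (H.card : ℝ) with hAdef
  have hApos : (0:ℝ) < A := by
    rw [hAdef]; exact_mod_cast Finset.card_pos.mpr hne
  -- b is ±1 on S i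
  have hbval : ∀ i ∈ U, ∀ j ∈ S i, b i j = 1 ∨ b i j = -1 := by
    intro i _ j hj
    obtain ⟨p, hp, hpj⟩ := Finset.mem_image.mp hj
    obtain ⟨hpH, hpi⟩ := Finset.mem_filter.mp hp
    have hpe : (i, j) = p := by
      rw [← hpi, ← hpj]
    show a (i, j) = 1 ∨ a (i, j) = -1
    rw [hpe]; exact ha p hpH
  have hSV : ∀ i, S i ⊆ V :=
    fun i => Finset.image_subset_image (Finset.filter_subset _ _)
  have hSne : ∀ i ∈ U, (S i).Nonempty := by
    intro i hi
    obtain ⟨p, hp, hpi⟩ := Finset.mem_image.mp hi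
    exact ⟨p.2, Finset.mem_image_of_mem _ (Finset.mem_filter.mpr ⟨hp, hpi⟩)⟩
  have hinj : ∀ i, ∀ p ∈ Row i, ∀ q ∈ Row i, p.2 = q.2 → p = q := by
    intro i p hp q hq h
    exact Prod.ext_iff.mpr ⟨((Finset.mem_filter.mp hp).2).trans
      ((Finset.mem_filter.mp hq).2).symm, h⟩
  have hcardS : ∀ i, (S i).card = (Row i).card :=
    fun i => Finset.card_image_of_injOn (hinj i)
  have hcardsum : ∑ i ∈ U, (Row i).card = H.card :=
    (Finset.card_eq_sum_card_fiberwise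
      (fun p hp => Finset.mem_image_of_mem Prod.fst hp)).symm
  have hXrow : ∀ i s, R i s = ∑ p ∈ Row i, a p * Stmt9Aux.chi s p.2 := by
    intro i s
    rw [hRdef]
    show Stmt9Aux.Xr (b i) ((Row i).image Prod.snd) s = _
    rw [Stmt9Aux.Xr, Finset.sum_image (hinj i)]
    refine Finset.sum_congr rfl fun p hp => ?_
    have hpi := (Finset.mem_filter.mp hp).2
    show a (i, p.2) * _ = _
    rw [← hpi]
  -- notation
  set sv : ℝ := Real.sqrt V.card with hsv
  set s3 : ℝ := Real.sqrt 3 with hs3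
  set P : ℝ := (2:ℝ) ^ V.card with hP
  set B : ℝ := Real.sqrt (Real.sqrt c) / s3 * A ^ ((3:ℝ)/4) with hB
  have hVne : V.Nonempty := hne.image _
  have hv1 : (1:ℝ) ≤ (V.card : ℝ) := by exact_mod_cast Finset.card_pos.mpr hVne
  have hsvpos : 0 < sv := Real.sqrt_pos.mpr (lt_of_lt_of_le one_pos hv1)
  have hs3pos : 0 < s3 := Real.sqrt_pos.mpr (by norm_num)
  have hPpos : 0 < P := by rw [hP]; positivity
  -- per-row lower bound
  have hrow : ∀ i ∈ U, P * Real.sqrt ((S i).card) / s3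
      ≤ ∑ s ∈ V.powerset, |((R i s : ℤ) : ℝ)| := by
    intro i hi
    exact Stmt9Aux.row_lower (hbval i hi) (hSne i hi) (hSV i)
  set Sig : ℝ := ∑ i ∈ U, Real.sqrt ((S i).card) with hSig
  set T : ℝ := ∑ s ∈ V.powerset, ∑ i ∈ U, |((R i s : ℤ) : ℝ)| with hT
  have hTcomm : T = ∑ i ∈ U, ∑ s ∈ V.powerset, |((R i s : ℤ) : ℝ)| := Finset.sum_comm
  have hSigT : P / s3 * Sig ≤ T := by
    rw [hTcomm, hSig, Finset.mul_sum]
    refine Finset.sum_le_sum fun i hi => ?_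
    calc P / s3 * Real.sqrt ((S i).card) = P * Real.sqrt ((S i).card) / s3 := by ring
      _ ≤ _ := hrow i hi
  -- A ≤ sv * Sig
  have hAle : A ≤ sv * Sig := by
    have e0 : A = ∑ i ∈ U, ((Row i).card : ℝ) := by
      rw [hAdef, ← hcardsum]
      push_cast
      rfl
    rw [e0, hSig, Finset.mul_sum]
    refine Finset.sum_le_sum fun i hi => ?_
    have e3 : Real.sqrt ((S i).card) ≤ sv := by
      rw [hsv]
      exact Real.sqrt_le_sqrt (by exact_mod_cast Finset.card_le_card (hSV i))
    calc ((Row i).card : ℝ) = ((S i).card : ℝ) := by rw [hcardS i]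
      _ = Real.sqrt ((S i).card) * Real.sqrt ((S i).card) :=
          (Real.mul_self_sqrt (by positivity)).symm
      _ ≤ sv * Real.sqrt ((S i).card) :=
          mul_le_mul_of_nonneg_right e3 (Real.sqrt_nonneg _)
  -- c-step : √√c * A^(3/4) * sv ≤ A
  have hstepc : Real.sqrt (Real.sqrt c) * A ^ ((3:ℝ)/4) * sv ≤ A := by
    have hu0 : (0:ℝ) ≤ ((U.card : ℕ) : ℝ) := by positivity
    have hvc : ((V.card : ℝ)) ^ 2 ≤ A / c := by
      rw [le_div_iff₀ hc]
      calc ((V.card : ℝ)) ^ 2 * c = c * ((V.card : ℝ)) ^ 2 := by ring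
        _ ≤ c * (((U.card : ℕ) : ℝ) + (V.card : ℝ)) ^ 2 := by
            apply mul_le_mul_of_nonneg_left _ hc.le
            have : (0:ℝ) ≤ (V.card : ℝ) := by positivity
            nlinarith
        _ ≤ A := hAineq
    have hvle : (V.card : ℝ) ≤ Real.sqrt A / Real.sqrt c := by
      calc (V.card : ℝ) = Real.sqrt (((V.card : ℝ)) ^ 2) := (Real.sqrt_sq (by positivity)).symm
        _ ≤ Real.sqrt (A / c) := Real.sqrt_le_sqrt hvc
        _ = Real.sqrt A / Real.sqrt c := Real.sqrt_div hApos.le c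
    have hsvle : sv ≤ Real.sqrt (Real.sqrt A) / Real.sqrt (Real.sqrt c) := by
      rw [hsv]
      calc Real.sqrt (V.card) ≤ Real.sqrt (Real.sqrt A / Real.sqrt c) :=
            Real.sqrt_le_sqrt hvle
        _ = Real.sqrt (Real.sqrt A) / Real.sqrt (Real.sqrt c) :=
            Real.sqrt_div (Real.sqrt_nonneg _) _
    have hq : Real.sqrt (Real.sqrt A) = A ^ ((1:ℝ)/4) := by
      rw [Real.sqrt_eq_rpow, Real.sqrt_eq_rpow, ← Real.rpow_mul hApos.le]
      norm_num
    have hq2 : A ^ ((3:ℝ)/4) * A ^ ((1:ℝ)/4) = A := by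
      rw [← Real.rpow_add hApos]
      norm_num
    have hccpos : 0 < Real.sqrt (Real.sqrt c) := Real.sqrt_pos.mpr (Real.sqrt_pos.mpr hc)
    calc Real.sqrt (Real.sqrt c) * A ^ ((3:ℝ)/4) * sv
        ≤ Real.sqrt (Real.sqrt c) * A ^ ((3:ℝ)/4)
            * (Real.sqrt (Real.sqrt A) / Real.sqrt (Real.sqrt c)) := by
          apply mul_le_mul_of_nonneg_left hsvle
          positivity
      _ = A ^ ((3:ℝ)/4) * Real.sqrt (Real.sqrt A) := by
          field_simp
      _ = A ^ ((3:ℝ)/4) * A ^ ((1:ℝ)/4) := by rw [hq]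
      _ = A := hq2
  -- main averaging inequality
  have hmain : P * B ≤ T := by
    refine le_of_mul_le_mul_right ?_ (mul_pos hs3pos hsvpos)
    calc P * B * (s3 * sv) = P * (Real.sqrt (Real.sqrt c) * A ^ ((3:ℝ)/4) * sv) := by
          rw [hB]; exact alg1 _ _ _ _ _ hs3pos.ne'
      _ ≤ P * A := mul_le_mul_of_nonneg_left hstepc hPpos.le
      _ ≤ P * (sv * Sig) := mul_le_mul_of_nonneg_left hAle hPpos.le
      _ = (P / s3 * Sig) * (s3 * sv) := alg2 _ _ _ _ hs3pos.ne'
      _ ≤ T * (s3 * sv) :=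
          mul_le_mul_of_nonneg_right hSigT (by positivity)
  -- extract a good switch setting
  have hex : ∃ s ∈ V.powerset, B ≤ ∑ i ∈ U, |((R i s : ℤ) : ℝ)| := by
    by_contra hcon
    push_neg at hcon
    have hlt : T < ∑ _s ∈ V.powerset, B :=
      Finset.sum_lt_sum_of_nonempty (Finset.powerset_nonempty V) hcon
    rw [Finset.sum_const, Finset.card_powerset, nsmul_eq_mul] at hlt
    have : ((2 ^ V.card : ℕ) : ℝ) = P := by rw [hP]; push_cast; ring
    rw [this] at hlt
    exact absurd hmain (not_le.mpr hlt)
  obtain ⟨s, _, hs⟩ := hex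
  refine ⟨fun i => if 0 ≤ R i s then 1 else -1, fun j => Stmt9Aux.chi s j,
    fun i => by dsimp only; split <;> simp, fun j => Stmt9Aux.chi_eq_one_or s j, ?_⟩
  have hsplit : (∑ p ∈ H, a p * (if 0 ≤ R p.1 s then (1:ℤ) else -1) * Stmt9Aux.chi s p.2)
      = ∑ i ∈ U, ∑ p ∈ Row i, a p * (if 0 ≤ R p.1 s then (1:ℤ) else -1) * Stmt9Aux.chi s p.2 :=
    (Finset.sum_fiberwise_of_maps_to (fun p hp => Finset.mem_image_of_mem Prod.fst hp) _).symm
  have hrowval : ∀ i ∈ U, ∑ p ∈ Row i, a p * (if 0 ≤ R p.1 s then (1:ℤ) else -1)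
      * Stmt9Aux.chi s p.2 = |R i s| := by
    intro i _
    have e1 : ∑ p ∈ Row i, a p * (if 0 ≤ R p.1 s then (1:ℤ) else -1) * Stmt9Aux.chi s p.2
        = (if 0 ≤ R i s then (1:ℤ) else -1) * ∑ p ∈ Row i, a p * Stmt9Aux.chi s p.2 := by
      rw [Finset.mul_sum]
      refine Finset.sum_congr rfl fun p hp => ?_
      have hpi := (Finset.mem_filter.mp hp).2
      rw [hpi]
      ring
    rw [e1, ← hXrow i s]
    split
    · rw [one_mul, abs_of_nonneg ‹_›]
    · rw [neg_one_mul, abs_of_neg (not_le.mp ‹_›)]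
  have hfin : (∑ p ∈ H, a p * (if 0 ≤ R p.1 s then (1:ℤ) else -1) * Stmt9Aux.chi s p.2)
      = ∑ i ∈ U, |R i s| := by
    rw [hsplit]
    exact Finset.sum_congr rfl hrowval
  show Real.sqrt (Real.sqrt c) / Real.sqrt 3 * A ^ ((3:ℝ)/4) ≤ _
  calc Real.sqrt (Real.sqrt c) / Real.sqrt 3 * A ^ ((3:ℝ)/4) = B := by rw [hB, hs3]
    _ ≤ ∑ i ∈ U, |((R i s : ℤ) : ℝ)| := hs
    _ = ((∑ i ∈ U, |R i s| : ℤ) : ℝ) := by push_cast; rfl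
    _ = _ := by rw [← hfin]
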